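/- arXiv:0709.2961 — 2 statements merged into one kernel-verified Lean document; each statement's English description precedes it below -/
import Mathlib

section
/- Let C be a set of difference constraints over a set X of integer variables and let G be its constraint graph. Then C is satisfiable in ℤ (i.e., there exists an assignment v : X → ℤ with v(x) − v(y) ≤ d for every constraint x − y ≤ d in C) if and only if G has no negative weight cycle. -/
namespace UTVPIPaper

/-- `IsPath E u p v`: `p` is a path (a sequence of consecutive weighted edges,
each belonging to the edge set `E`) from vertex `u` to vertex `v`. -/
inductive IsPath {V : Type*} (E : Set (V × V × ℤ)) : V → List (V × V × ℤ) → V → Prop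
  | nil (v : V) : IsPath E v [] v
  | cons {u v w : V} {d : ℤ} {p : List (V × V × ℤ)} :
      (u, v, d) ∈ E → IsPath E v p w → IsPath E u ((u, v, d) :: p) w

/-- The weight of a path: the sum of the weights of its edges. -/
def pweight {V : Type*} (p : List (V × V × ℤ)) : ℤ := (p.map fun e => e.2.2).sum

/-- The graph `E` has no negative weight cycle. -/
def NoNegCycle {V : Type*} (E : Set (V × V × ℤ)) : Prop :=
  ∀ (v : V) (p : List (V × V × ℤ)), IsPath E v p v → 0 ≤ pweight p

/-- `wSP E u v` is the minimum weight of a path from `u` to `v` in `E`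
(`⊤` if no path exists). -/
noncomputable def wSP {V : Type*} (E : Set (V × V × ℤ)) (u v : V) : WithTop ℤ :=
  sInf {w : WithTop ℤ | ∃ p, IsPath E u p v ∧ (pweight p : WithTop ℤ) = w}

section Aux

variable {V : Type*} {E : Set (V × V × ℤ)}

lemma pweight_nil : pweight ([] : List (V × V × ℤ)) = 0 := rfl

lemma pweight_cons (e : V × V × ℤ) (p : List (V × V × ℤ)) :
    pweight (e :: p) = e.2.2 + pweight p := by simp [pweight]

lemma pweight_append (p q : List (V × V × ℤ)) :
    pweight (p ++ q) = pweight p + pweight q := by simp [pweight]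

lemma IsPath.append {u v w : V} {p q : List (V × V × ℤ)}
    (hp : IsPath E u p v) (hq : IsPath E v q w) : IsPath E u (p ++ q) w := by
  induction hp with
  | nil => exact hq
  | cons he _ ih => exact IsPath.cons he (ih hq)

lemma IsPath.split {u w : V} {p q : List (V × V × ℤ)}
    (h : IsPath E u (p ++ q) w) : ∃ m, IsPath E u p m ∧ IsPath E m q w := by
  induction p generalizing u with
  | nil => exact ⟨u, IsPath.nil u, h⟩
  | cons e p ih =>
    obtain ⟨x, y, d⟩ := e
    cases h with
    | cons he h' =>
      obtain ⟨m, h1, h2⟩ := ih h'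
      exact ⟨m, IsPath.cons he h1, h2⟩

lemma IsPath.edges_mem {u w : V} {p : List (V × V × ℤ)}
    (h : IsPath E u p w) : ∀ e ∈ p, e ∈ E := by
  induction h with
  | nil => simp
  | cons he _ ih =>
    intro e hmem
    rcases List.mem_cons.mp hmem with rfl | hm
    · exact he
    · exact ih e hm

lemma exists_split_of_not_nodup {α : Type*} {l : List α} (h : ¬ l.Nodup) :
    ∃ (x : α) (a b c : List α), l = a ++ x :: (b ++ x :: c) := by
  induction l with
  | nil => simp at h
  | cons hd tl ih =>
    by_cases hmem : hd ∈ tl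
    · obtain ⟨s, t, rfl⟩ := List.append_of_mem hmem
      exact ⟨hd, [], s, t, by simp⟩
    · have htl : ¬ tl.Nodup := fun hn => h (List.nodup_cons.mpr ⟨hmem, hn⟩)
      obtain ⟨x, a, b, c, rfl⟩ := ih htl
      exact ⟨x, hd :: a, b, c, by simp⟩

end Aux

/-- If there is no negative cycle, every path weight is bounded below by the
sum of the negative parts of all edge weights. -/
lemma path_weight_lb {X : Type*} {C : Set (X × X × ℤ)} (hfin : C.Finite)
    (hnc : ∀ (v : X) (p : List (X × X × ℤ)), IsPath C v p v → 0 ≤ pweight p) :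
    ∀ (n : ℕ) (p : List (X × X × ℤ)), p.length ≤ n → ∀ u w, IsPath C u p w →
      (hfin.toFinset.sum fun e => min e.2.2 0) ≤ pweight p := by
  intro n
  induction n with
  | zero =>
    intro p hlen u w hp
    have : p = [] := List.length_eq_zero_iff.mp (Nat.le_zero.mp hlen)
    subst this
    have : (hfin.toFinset.sum fun e => min e.2.2 0) ≤ 0 :=
      Finset.sum_nonpos fun e _ => min_le_right _ _
    simpa [pweight_nil] using this
  | succ n ih =>
    intro p hlen u w hp
    classical
    by_cases hnd : p.Nodup
    · -- all edges distinct and in C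
      have hsub : p.toFinset ⊆ hfin.toFinset := by
        intro e he
        rw [Set.Finite.mem_toFinset]
        exact hp.edges_mem e (List.mem_toFinset.mp he)
      have h1 : (hfin.toFinset.sum fun e => min e.2.2 0) ≤
          (p.toFinset.sum fun e => min e.2.2 0) := by
        have := Finset.sum_le_sum_of_subset_of_nonneg (f := fun e => -min e.2.2 0)
          hsub (fun e _ _ => by simp [neg_nonneg])
        simp only [Finset.sum_neg_distrib] at this
        linarith
      have h2 : (p.toFinset.sum fun e => min e.2.2 0) ≤
          (p.toFinset.sum fun e => e.2.2) :=
        Finset.sum_le_sum fun e _ => min_le_left _ _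
      have h3 : (p.toFinset.sum fun e => e.2.2) = pweight p := by
        rw [List.sum_toFinset _ hnd]; rfl
      linarith
    · obtain ⟨e, a, b, c, rfl⟩ := exists_split_of_not_nodup hnd
      obtain ⟨x, y, d⟩ := e
      obtain ⟨m1, ha, h1⟩ := IsPath.split (p := a) hp
      cases h1 with
      | cons he h2 =>
        obtain ⟨m2, hb, h3⟩ := IsPath.split (p := b) h2
        cases h3 with
        | cons he' h4 =>
          -- cycle from y through b back to y
          have hcyc : IsPath C y (b ++ [(x, y, d)]) y :=
            hb.append (IsPath.cons he' (IsPath.nil y))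
          have hcw : 0 ≤ pweight b + d := by
            have := hnc y _ hcyc
            simpa [pweight_append, pweight_cons, pweight_nil] using this
          -- shorter path
          have hnew : IsPath C u (a ++ (x, y, d) :: c) w :=
            ha.append (IsPath.cons he h4)
          have hlen' : (a ++ (x, y, d) :: c).length ≤ n := by
            simp only [List.length_append, List.length_cons] at hlen ⊢
            omega
          have := ih _ hlen' u w hnew
          have hw1 : pweight (a ++ (x, y, d) :: (b ++ (x, y, d) :: c)) =
              pweight (a ++ (x, y, d) :: c) + (pweight b + d) := by
            simp [pweight_append, pweight_cons]; ring
          linarith [this, hw1]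

/-- A (finite) set `C` of difference constraints (the constraint
`(x, y, d)` means `x - y ≤ d`) is satisfiable in ℤ iff its constraint graph
(which has an edge `(x, y, d)` for each constraint `x - y ≤ d` in `C`)
has no negative weight cycle. -/
theorem diff_satisfiable_iff_no_negative_cycle {X : Type*}
    (C : Set (X × X × ℤ)) (hfin : C.Finite) :
    (∃ v : X → ℤ, ∀ e ∈ C, v e.1 - v e.2.1 ≤ e.2.2) ↔
      ¬ ∃ (u : X) (p : List (X × X × ℤ)), IsPath C u p u ∧ pweight p < 0 := by
  constructor
  · rintro ⟨v, hv⟩ ⟨u, p, hp, hneg⟩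
    have key : ∀ (p : List (X × X × ℤ)) (a b : X), IsPath C a p b →
        v a - v b ≤ pweight p := by
      intro p a b hpath
      induction hpath with
      | nil => simp [pweight_nil]
      | cons he _ ih =>
        have := hv _ he
        rw [pweight_cons]
        simp only at this
        linarith
    have := key p u u hp
    linarith
  · intro h
    have hnc : ∀ (v : X) (p : List (X × X × ℤ)), IsPath C v p v → 0 ≤ pweight p := by
      push_neg at h
      intro v p hp
      exact h v p hp
    set B : ℤ := hfin.toFinset.sum fun e => min e.2.2 0 with hB
    set S : X → Set ℤ := fun x => {w : ℤ | ∃ u p, IsPath C u p x ∧ pweight p = w}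
      with hS
    have hne : ∀ x, (S x).Nonempty := fun x => ⟨0, x, [], IsPath.nil x, rfl⟩
    have hbdd : ∀ x, BddBelow (S x) := by
      intro x
      refine ⟨B, ?_⟩
      rintro w ⟨u, p, hp, rfl⟩
      exact path_weight_lb hfin hnc p.length p le_rfl u x hp
    refine ⟨fun x => -sInf (S x), ?_⟩
    rintro ⟨x, y, d⟩ he
    simp only
    have key : sInf (S y) ≤ sInf (S x) + d := by
      have hlb : ∀ w ∈ S x, sInf (S y) - d ≤ w := by
        rintro w ⟨u, p, hp, rfl⟩
        have hmem : pweight p + d ∈ S y := by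
          refine ⟨u, p ++ [(x, y, d)], hp.append (IsPath.cons he (IsPath.nil y)), ?_⟩
          simp [pweight_append, pweight_cons, pweight_nil]
        have := csInf_le (hbdd y) hmem
        linarith
      have := le_csInf (hne x) hlb
      linarith
    linarith
end UTVPIPaper
end

section
/- Let φ be a set of UTVPI constraints. Then φ is unsatisfiable in ℤ if and only if the tightened transitive closure TTC(φ) contains a constraint of the form 0 ≤ d (i.e., with both coefficients zero) where d < 0. -/
namespace UTVPIPaper

/-- A linear integer constraint `f ≤ bound`, where `f` is a finitely supported
integer linear form over the variables `X`. -/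
structure UC (X : Type*) where
  f : X →₀ ℤ
  bound : ℤ

variable {X : Type*}

/-- `c` is a UTVPI constraint, i.e. of the form `a·x + b·y ≤ d` with `a, b ∈ {-1, 0, 1}`. -/
def UC.IsUTVPI (c : UC X) : Prop :=
  ∃ (a b : ℤ) (x y : X), (a = -1 ∨ a = 0 ∨ a = 1) ∧ (b = -1 ∨ b = 0 ∨ b = 1) ∧
    c.f = Finsupp.single x a + Finsupp.single y b

/-- The constraint `c` holds under the integer assignment `v`. -/
def UC.holds (v : X → ℤ) (c : UC X) : Prop :=
  (c.f.sum fun x a => a * v x) ≤ c.bound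

/-- The assignment `v` satisfies all constraints of `φ`. -/
def Sat (v : X → ℤ) (φ : Set (UC X)) : Prop := ∀ c ∈ φ, c.holds v

/-- `φ` is satisfiable in ℤ. -/
def SatZ (φ : Set (UC X)) : Prop := ∃ v : X → ℤ, Sat v φ

/-- The constraint `c` holds under the rational assignment `v`. -/
def UC.holdsQ (v : X → ℚ) (c : UC X) : Prop :=
  (c.f.sum fun x a => (a : ℚ) * v x) ≤ (c.bound : ℚ)

/-- `φ` is satisfiable in ℚ. -/
def SatQ (φ : Set (UC X)) : Prop := ∃ v : X → ℚ, ∀ c ∈ φ, c.holdsQ v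

/-- The transitive closure `TC(φ)`: the smallest set containing `φ` closed under
the rule: `a·x - c·y ≤ d₁` and `c·y + b·z ≤ d₂` imply `a·x + b·z ≤ d₁ + d₂`,
for `a, b ∈ {-1,0,1}` and `c ∈ {-1,1}`. -/
inductive TC (φ : Set (UC X)) : UC X → Prop
  | base {c : UC X} : c ∈ φ → TC φ c
  | trans {a b c : ℤ} {x y z : X} {d₁ d₂ : ℤ} :
      (a = -1 ∨ a = 0 ∨ a = 1) → (b = -1 ∨ b = 0 ∨ b = 1) → (c = -1 ∨ c = 1) →
      TC φ ⟨Finsupp.single x a - Finsupp.single y c, d₁⟩ →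
      TC φ ⟨Finsupp.single y c + Finsupp.single z b, d₂⟩ →
      TC φ ⟨Finsupp.single x a + Finsupp.single z b, d₁ + d₂⟩

/-- The tightened closure `TI(φ)`: the smallest set containing `φ` closed under
the rule: `a·x + a·x ≤ d` implies `a·x ≤ ⌊d/2⌋`, for `a ∈ {-1,1}`. -/
inductive TI (φ : Set (UC X)) : UC X → Prop
  | base {c : UC X} : c ∈ φ → TI φ c
  | tighten {a : ℤ} {x : X} {d : ℤ} :
      (a = -1 ∨ a = 1) →
      TI φ ⟨Finsupp.single x a + Finsupp.single x a, d⟩ →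
      TI φ ⟨Finsupp.single x a, Int.fdiv d 2⟩

/-- The tightened transitive closure `TTC(φ)`: the smallest set containing `φ`
closed under both the transitivity and the tightening rules. -/
inductive TTC (φ : Set (UC X)) : UC X → Prop
  | base {c : UC X} : c ∈ φ → TTC φ c
  | trans {a b c : ℤ} {x y z : X} {d₁ d₂ : ℤ} :
      (a = -1 ∨ a = 0 ∨ a = 1) → (b = -1 ∨ b = 0 ∨ b = 1) → (c = -1 ∨ c = 1) →
      TTC φ ⟨Finsupp.single x a - Finsupp.single y c, d₁⟩ →
      TTC φ ⟨Finsupp.single y c + Finsupp.single z b, d₂⟩ →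
      TTC φ ⟨Finsupp.single x a + Finsupp.single z b, d₁ + d₂⟩
  | tighten {a : ℤ} {x : X} {d : ℤ} :
      (a = -1 ∨ a = 1) →
      TTC φ ⟨Finsupp.single x a + Finsupp.single x a, d⟩ →
      TTC φ ⟨Finsupp.single x a, Int.fdiv d 2⟩

/-- Vertices of the constraint graph: `(true, x)` is `x⁺` and `(false, x)` is `x⁻`. -/
abbrev Vtx (X : Type*) := Bool × X

/-- The counterpart `-u` of a vertex `u`. -/
def vneg (u : Vtx X) : Vtx X := (!u.1, u.2)

/-- The set of edges `E(c)` associated with a UTVPI constraint `c`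
(the transformation table):
`x - y ≤ d` gives `(y⁺, x⁺, d)` and `(x⁻, y⁻, d)`;
`x + y ≤ d` gives `(y⁻, x⁺, d)` and `(x⁻, y⁺, d)`;
`-x - y ≤ d` gives `(y⁺, x⁻, d)` and `(x⁺, y⁻, d)`;
`x ≤ d` gives `(x⁻, x⁺, 2d)`; `-x ≤ d` gives `(x⁺, x⁻, 2d)`. -/
def cedges (c : UC X) : Set (Vtx X × Vtx X × ℤ) :=
  { e | ∃ (x y : X) (d : ℤ),
      (c = ⟨Finsupp.single x 1 - Finsupp.single y 1, d⟩ ∧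
        (e = ((true, y), (true, x), d) ∨ e = ((false, x), (false, y), d))) ∨
      (c = ⟨Finsupp.single x 1 + Finsupp.single y 1, d⟩ ∧
        (e = ((false, y), (true, x), d) ∨ e = ((false, x), (true, y), d))) ∨
      (c = ⟨-Finsupp.single x 1 - Finsupp.single y 1, d⟩ ∧
        (e = ((true, y), (false, x), d) ∨ e = ((true, x), (false, y), d))) ∨
      (c = ⟨Finsupp.single x 1, d⟩ ∧ e = ((false, x), (true, x), 2 * d)) ∨
      (c = ⟨-Finsupp.single x 1, d⟩ ∧ e = ((true, x), (false, x), 2 * d)) }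

/-- The constraint graph `G_φ` of a set `φ` of UTVPI constraints. -/
def Gr (φ : Set (UC X)) : Set (Vtx X × Vtx X × ℤ) := { e | ∃ c ∈ φ, e ∈ cedges c }

/-- The bounds function `ρ(u) = ⌊wSP(u, -u) / 2⌋` (`⊤` if there is no path from `u` to `-u`). -/
noncomputable def rho (φ : Set (UC X)) (u : Vtx X) : WithTop ℤ :=
  (wSP (Gr φ) u (vneg u)).map fun w => Int.fdiv w 2

/-! ### Auxiliary development -/

/-- Evaluation of a linear form under an assignment. -/
def evalv (v : X → ℤ) (f : X →₀ ℤ) : ℤ := f.sum fun x a => a * v x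

lemma holds_def {v : X → ℤ} {c : UC X} : c.holds v ↔ evalv v c.f ≤ c.bound := Iff.rfl

@[simp] lemma evalv_zero (v : X → ℤ) : evalv v 0 = 0 := Finsupp.sum_zero_index

@[simp] lemma evalv_single (v : X → ℤ) (x : X) (a : ℤ) :
    evalv v (Finsupp.single x a) = a * v x :=
  Finsupp.sum_single_index (by simp)

lemma evalv_add (v : X → ℤ) (f g : X →₀ ℤ) : evalv v (f + g) = evalv v f + evalv v g :=
  Finsupp.sum_add_index' (by simp) (by intros; ring)

lemma evalv_congr {v w : X → ℤ} {f : X →₀ ℤ} (h : ∀ y ∈ f.support, v y = w y) :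
    evalv v f = evalv w f :=
  Finsupp.sum_congr fun y hy => by rw [h y hy]

lemma UC.mk_eq {c : UC X} {f : X →₀ ℤ} {d : ℤ} (hf : f = c.f) (hd : d = c.bound) :
    (⟨f, d⟩ : UC X) = c := by cases c; cases hf; cases hd; rfl

/-- Soundness of `TTC` over ℤ. -/
lemma holds_of_TTC {φ : Set (UC X)} {v : X → ℤ} (hv : Sat v φ) {c : UC X}
    (h : TTC φ c) : c.holds v := by
  induction h with
  | base hc => exact hv _ hc
  | trans ha hb hcc h1 h2 ih1 ih2 =>
      rename_i a b cc x y z d₁ d₂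
      rw [holds_def] at ih1 ih2 ⊢
      have e : Finsupp.single x a + Finsupp.single z b
          = (Finsupp.single x a - Finsupp.single y cc)
            + (Finsupp.single y cc + Finsupp.single z b) := by abel
      simp only [] at ih1 ih2
      calc evalv v (Finsupp.single x a + Finsupp.single z b)
          = evalv v (Finsupp.single x a - Finsupp.single y cc)
            + evalv v (Finsupp.single y cc + Finsupp.single z b) := by rw [e, evalv_add]
        _ ≤ d₁ + d₂ := add_le_add ih1 ih2
  | tighten ha h ih =>
      rename_i a x d
      simp only [holds_def, evalv_add, evalv_single] at ih
      show evalv v (Finsupp.single x a) ≤ Int.fdiv d 2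
      rw [evalv_single]
      rw [Int.fdiv_eq_ediv_of_nonneg d (by norm_num)]
      omega

/-- Closure property: if every element of `ψ` is `TTC`-derivable from `φ`, then
so is every element of `TTC ψ`. -/
lemma TTC_of_TTC {φ ψ : Set (UC X)} (h : ∀ c ∈ ψ, TTC φ c) {c : UC X}
    (hc : TTC ψ c) : TTC φ c := by
  induction hc with
  | base hc => exact h _ hc
  | trans ha hb hcc h1 h2 ih1 ih2 => exact TTC.trans ha hb hcc ih1 ih2
  | tighten ha h ih => exact TTC.tighten ha ih

/-- The set of variables occurring in `φ`. -/
def Vset (φ : Set (UC X)) : Set X := ⋃ c ∈ φ, ↑c.f.support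

lemma mem_Vset {y : X} {φ : Set (UC X)} : y ∈ Vset φ ↔ ∃ c ∈ φ, y ∈ c.f.support := by
  simp [Vset]

lemma Vset_finite {φ : Set (UC X)} (hfin : φ.Finite) : (Vset φ).Finite :=
  Set.Finite.biUnion hfin fun c _ => c.f.support.finite_toSet

lemma supp_TTC {φ : Set (UC X)} {c : UC X} (h : TTC φ c) : ↑c.f.support ⊆ Vset φ := by
  classical
  induction h with
  | base hc => exact fun y hy => mem_Vset.2 ⟨_, hc, hy⟩
  | trans ha hb hcc h1 h2 ih1 ih2 =>
      rename_i a b cc x y z d₁ d₂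
      intro w hw
      have e : Finsupp.single x a + Finsupp.single z b
          = (Finsupp.single x a - Finsupp.single y cc)
            + (Finsupp.single y cc + Finsupp.single z b) := by abel
      simp only [Finset.mem_coe] at hw
      rw [e] at hw
      rcases Finset.mem_union.1 (Finsupp.support_add hw) with h' | h'
      · exact ih1 (Finset.mem_coe.2 h')
      · exact ih2 (Finset.mem_coe.2 h')
  | tighten ha h ih =>
      rename_i a x d
      intro w hw
      simp only [Finset.mem_coe] at hw
      have hwx : w = x := Finset.mem_singleton.1 (Finsupp.support_single_subset hw)
      subst hwx
      apply ih
      simp only [Finset.mem_coe, ← Finsupp.single_add, Finsupp.mem_support_iff,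
        Finsupp.single_apply, if_pos rfl]
      rcases ha with rfl | rfl <;> norm_num
lemma decomp_one {c : UC X} (hc : c.IsUTVPI) {x : X} (h : c.f x = 1) :
    ∃ z b, (b = -1 ∨ b = 0 ∨ b = 1) ∧ c.f = Finsupp.single x 1 + Finsupp.single z b := by
  classical
  obtain ⟨a, b, p, q, ha, hb, hf⟩ := hc
  rw [hf] at h ⊢
  rw [Finsupp.add_apply, Finsupp.single_apply, Finsupp.single_apply] at h
  by_cases hp : p = x <;> by_cases hq : q = x
  · subst hp; subst hq
    rw [if_pos rfl, if_pos rfl] at h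
    rcases ha with rfl | rfl | rfl <;> rcases hb with rfl | rfl | rfl <;>
      first
        | omega
        | exact ⟨_, 0, Or.inr (Or.inl rfl), rfl⟩
        | exact ⟨_, 0, Or.inr (Or.inl rfl), add_comm _ _⟩
  · subst hp
    rw [if_pos rfl, if_neg hq, add_zero] at h
    exact ⟨q, b, hb, by rw [h]⟩
  · subst hq
    rw [if_neg hp, if_pos rfl, zero_add] at h
    exact ⟨p, a, ha, by rw [h, add_comm]⟩
  · rw [if_neg hp, if_neg hq] at h; omega

lemma neg_isUTVPI {c : UC X} (hc : c.IsUTVPI) : (UC.mk (-c.f) 0).IsUTVPI := by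
  obtain ⟨a, b, p, q, ha, hb, hf⟩ := hc
  exact ⟨-a, -b, p, q, by omega, by omega, by
    show -c.f = _
    rw [hf, Finsupp.single_neg, Finsupp.single_neg, neg_add]⟩

lemma decomp_negone {c : UC X} (hc : c.IsUTVPI) {x : X} (h : c.f x = -1) :
    ∃ z b, (b = -1 ∨ b = 0 ∨ b = 1) ∧ c.f = Finsupp.single x (-1) + Finsupp.single z b := by
  obtain ⟨z, b', hb', h2⟩ := decomp_one (neg_isUTVPI hc)
    (show (-c.f) x = 1 by rw [Finsupp.neg_apply, h]; ring)
  refine ⟨z, -b', by omega, ?_⟩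
  rw [Finsupp.single_neg, Finsupp.single_neg, ← neg_add, ← h2, neg_neg]

lemma decomp_two {c : UC X} (hc : c.IsUTVPI) {x : X} (h : c.f x = 2) :
    c.f = Finsupp.single x 1 + Finsupp.single x 1 := by
  classical
  obtain ⟨a, b, p, q, ha, hb, hf⟩ := hc
  rw [hf] at h ⊢
  rw [Finsupp.add_apply, Finsupp.single_apply, Finsupp.single_apply] at h
  by_cases hp : p = x <;> by_cases hq : q = x
  · subst hp; subst hq
    rw [if_pos rfl, if_pos rfl] at h
    have ha1 : a = 1 := by omega
    have hb1 : b = 1 := by omega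
    rw [ha1, hb1]
  · subst hp; rw [if_pos rfl, if_neg hq, add_zero] at h; omega
  · subst hq; rw [if_neg hp, if_pos rfl, zero_add] at h; omega
  · rw [if_neg hp, if_neg hq] at h; omega

lemma decomp_negtwo {c : UC X} (hc : c.IsUTVPI) {x : X} (h : c.f x = -2) :
    c.f = Finsupp.single x (-1) + Finsupp.single x (-1) := by
  have h2 := decomp_two (neg_isUTVPI hc) (show (-c.f) x = 2 by rw [Finsupp.neg_apply, h]; ring)
  rw [Finsupp.single_neg, ← neg_add, ← h2, neg_neg]

lemma coeff_bound {c : UC X} (hc : c.IsUTVPI) (x : X) : -2 ≤ c.f x ∧ c.f x ≤ 2 := by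
  classical
  obtain ⟨a, b, p, q, ha, hb, hf⟩ := hc
  rw [hf, Finsupp.add_apply, Finsupp.single_apply, Finsupp.single_apply]
  split_ifs <;> omega

open scoped Classical in
/-- Replace a two-sided occurrence of `x` by its tightened single occurrence. -/
noncomputable def tightAt (x : X) (c : UC X) : UC X :=
  if c.f = Finsupp.single x 1 + Finsupp.single x 1 then ⟨Finsupp.single x 1, c.bound.fdiv 2⟩
  else if c.f = Finsupp.single x (-1) + Finsupp.single x (-1) then
    ⟨Finsupp.single x (-1), c.bound.fdiv 2⟩
  else c

lemma tightAt_TTC (x : X) {φ : Set (UC X)} {c : UC X} (hc : c ∈ φ) : TTC φ (tightAt x c) := by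
  unfold tightAt
  split_ifs with h1 h2
  · exact TTC.tighten (Or.inr rfl) (by rw [UC.mk_eq h1.symm rfl]; exact TTC.base hc)
  · exact TTC.tighten (Or.inl rfl) (by rw [UC.mk_eq h2.symm rfl]; exact TTC.base hc)
  · exact TTC.base hc

lemma tightAt_utvpi (x : X) {c : UC X} (hc : c.IsUTVPI) : (tightAt x c).IsUTVPI := by
  unfold tightAt
  split_ifs with h1 h2
  · exact ⟨1, 0, x, x, by norm_num, by norm_num, by simp⟩
  · exact ⟨-1, 0, x, x, by norm_num, by norm_num, by simp⟩
  · exact hc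

lemma tightAt_coeff (x : X) {c : UC X} (hc : c.IsUTVPI) :
    (tightAt x c).f x = -1 ∨ (tightAt x c).f x = 0 ∨ (tightAt x c).f x = 1 := by
  unfold tightAt
  split_ifs with h1 h2
  · right; right; simp [Finsupp.single_apply]
  · left; simp [Finsupp.single_apply]
  · have hb := coeff_bound hc x
    have hn2 : c.f x ≠ 2 := fun hh => h1 (decomp_two hc hh)
    have hn2' : c.f x ≠ -2 := fun hh => h2 (decomp_negtwo hc hh)
    omega

lemma holds_of_tightAt {v : X → ℤ} (x : X) {c : UC X} (h : (tightAt x c).holds v) :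
    c.holds v := by
  unfold tightAt at h
  split_ifs at h with h1 h2
  · rw [holds_def] at h ⊢
    simp only [evalv_single] at h
    rw [h1, evalv_add, evalv_single]
    have := Int.fdiv_eq_ediv_of_nonneg c.bound (by norm_num : (0:ℤ) ≤ 2)
    omega
  · rw [holds_def] at h ⊢
    simp only [evalv_single] at h
    rw [h2, evalv_add, evalv_single]
    have := Int.fdiv_eq_ediv_of_nonneg c.bound (by norm_num : (0:ℤ) ≤ 2)
    omega
  · exact h
lemma sat_of_no_vars {φ : Set (UC X)} (hVe : Vset φ = ∅)
    (hneg : ∀ d : ℤ, d < 0 → ¬ TTC φ ⟨0, d⟩) : SatZ φ := by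
  refine ⟨fun _ => 0, fun c hc => ?_⟩
  have hsupp : c.f = 0 := by
    rw [← Finsupp.support_eq_empty, Finset.eq_empty_iff_forall_notMem]
    intro y hy
    have : y ∈ Vset φ := mem_Vset.2 ⟨c, hc, hy⟩
    rw [hVe] at this
    exact this
  have hb : 0 ≤ c.bound := by
    by_contra hb'
    push_neg at hb'
    exact hneg _ hb' (TTC.base (by rwa [UC.mk_eq hsupp.symm rfl]))
  rw [holds_def, hsupp, evalv_zero]
  exact hb

lemma complete (n : ℕ) : ∀ φ : Set (UC X), (∀ c ∈ φ, c.IsUTVPI) → φ.Finite →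
    ∀ hV : (Vset φ).Finite, hV.toFinset.card ≤ n →
    (∀ d : ℤ, d < 0 → ¬ TTC φ ⟨0, d⟩) → SatZ φ := by
  induction n with
  | zero =>
    intro φ hU hfin hV hcard hneg
    refine sat_of_no_vars ?_ hneg
    exact Set.Finite.toFinset_eq_empty.1 (Finset.card_eq_zero.1 (Nat.le_zero.1 hcard))
  | succ n ih =>
    intro φ hU hfin hV hcard hneg
    classical
    by_cases hVe : Vset φ = ∅
    · exact sat_of_no_vars hVe hneg
    · obtain ⟨x, hx⟩ := Set.nonempty_iff_ne_empty.2 hVe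
      set ψ : Set (UC X) := tightAt x '' φ with hψdef
      have hψfin : ψ.Finite := hfin.image _
      have hψU : ∀ c ∈ ψ, c.IsUTVPI := by
        rintro c ⟨c', hc', rfl⟩; exact tightAt_utvpi x (hU c' hc')
      have hψTTC : ∀ c ∈ ψ, TTC φ c := by
        rintro c ⟨c', hc', rfl⟩; exact tightAt_TTC x hc'
      have hψcoef : ∀ c ∈ ψ, c.f x = -1 ∨ c.f x = 0 ∨ c.f x = 1 := by
        rintro c ⟨c', hc', rfl⟩; exact tightAt_coeff x (hU c' hc')
      set φ' : Set (UC X) :=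
        {c | c ∈ ψ ∧ c.f x = 0} ∪
          (fun p : UC X × UC X => (⟨p.1.f + p.2.f, p.1.bound + p.2.bound⟩ : UC X)) ''
            {p : UC X × UC X | p.1 ∈ ψ ∧ p.2 ∈ ψ ∧ p.1.f x = 1 ∧ p.2.f x = -1} with hφ'def
      have hcomb : ∀ c₁ ∈ ψ, ∀ c₂ ∈ ψ, c₁.f x = 1 → c₂.f x = -1 →
          (⟨c₁.f + c₂.f, c₁.bound + c₂.bound⟩ : UC X) ∈ φ' := by
        intro c₁ h1 c₂ h2 e1 e2
        rw [hφ'def]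
        exact Or.inr ⟨(c₁, c₂), ⟨h1, h2, e1, e2⟩, rfl⟩
      have hφ'TTC : ∀ c ∈ φ', TTC φ c := by
        intro c hc
        rw [hφ'def] at hc
        rcases hc with ⟨hcψ, -⟩ | ⟨⟨c₁, c₂⟩, ⟨h1, h2, e1, e2⟩, rfl⟩
        · exact hψTTC _ hcψ
        · obtain ⟨z, b, hb, h1f⟩ := decomp_one (hψU _ h1) e1
          obtain ⟨w, b', hb', h2f⟩ := decomp_negone (hψU _ h2) e2
          have hp2 : TTC φ ⟨Finsupp.single w b' - Finsupp.single x 1, c₂.bound⟩ := by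
            rw [UC.mk_eq (by rw [h2f, Finsupp.single_neg]; abel) rfl]
            exact hψTTC _ h2
          have hp1 : TTC φ ⟨Finsupp.single x 1 + Finsupp.single z b, c₁.bound⟩ := by
            rw [UC.mk_eq h1f.symm rfl]
            exact hψTTC _ h1
          have hres := TTC.trans hb' hb (Or.inr rfl) hp2 hp1
          have hfe : Finsupp.single w b' + Finsupp.single z b = c₁.f + c₂.f := by
            rw [h1f, h2f, Finsupp.single_neg]; abel
          have heq : (⟨Finsupp.single w b' + Finsupp.single z b, c₂.bound + c₁.bound⟩ : UC X)
              = (⟨c₁.f + c₂.f, c₁.bound + c₂.bound⟩ : UC X) :=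
            UC.mk_eq hfe (add_comm _ _)
          rwa [heq] at hres
      have hφ'U : ∀ c ∈ φ', c.IsUTVPI := by
        intro c hc
        rw [hφ'def] at hc
        rcases hc with ⟨hcψ, -⟩ | ⟨⟨c₁, c₂⟩, ⟨h1, h2, e1, e2⟩, rfl⟩
        · exact hψU _ hcψ
        · obtain ⟨z, b, hb, h1f⟩ := decomp_one (hψU _ h1) e1
          obtain ⟨w, b', hb', h2f⟩ := decomp_negone (hψU _ h2) e2
          refine ⟨b, b', z, w, hb, hb', ?_⟩
          show c₁.f + c₂.f = _
          rw [h1f, h2f, Finsupp.single_neg]; abel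
      have hφ'fin : φ'.Finite := by
        rw [hφ'def]
        apply Set.Finite.union
        · exact hψfin.subset fun c hc => hc.1
        · exact Set.Finite.image _ ((hψfin.prod hψfin).subset fun p hp => ⟨hp.1, hp.2.1⟩)
      have hφ'x : ∀ c ∈ φ', c.f x = 0 := by
        intro c hc
        rw [hφ'def] at hc
        rcases hc with ⟨-, h0⟩ | ⟨⟨c₁, c₂⟩, ⟨h1, h2, e1, e2⟩, rfl⟩
        · exact h0
        · show (c₁.f + c₂.f) x = 0
          rw [Finsupp.add_apply, e1, e2]; ring
      have hVsub : Vset φ' ⊆ Vset φ \ {x} := by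
        intro y hy
        obtain ⟨c, hcφ', hysupp⟩ := mem_Vset.1 hy
        refine ⟨supp_TTC (hφ'TTC c hcφ') hysupp, ?_⟩
        intro hyx
        rw [Set.mem_singleton_iff] at hyx
        subst hyx
        exact Finsupp.mem_support_iff.1 hysupp (hφ'x c hcφ')
      have hV' : (Vset φ').Finite := hV.subset (hVsub.trans Set.diff_subset)
      have hcard' : hV'.toFinset.card ≤ n := by
        have hsub : hV'.toFinset ⊆ hV.toFinset.erase x := by
          intro y hy
          rw [Set.Finite.mem_toFinset] at hy
          obtain ⟨h1, h2⟩ := hVsub hy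
          exact Finset.mem_erase.2 ⟨by simpa using h2, hV.mem_toFinset.2 h1⟩
        have h1 := Finset.card_le_card hsub
        have h2 := Finset.card_erase_of_mem (hV.mem_toFinset.2 hx)
        omega
      have hneg' : ∀ d : ℤ, d < 0 → ¬ TTC φ' ⟨0, d⟩ :=
        fun d hd hT => hneg d hd (TTC_of_TTC hφ'TTC hT)
      obtain ⟨v', hv'⟩ := ih φ' hφ'U hφ'fin hV' hcard' hneg'
      -- choose a value for x
      set Hi : Finset ℤ := (hψfin.toFinset.filter fun c => c.f x = 1).image
        fun c => c.bound - evalv v' (c.f.erase x) with hHidef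
      set Lo : Finset ℤ := (hψfin.toFinset.filter fun c => c.f x = -1).image
        fun c => evalv v' (c.f.erase x) - c.bound with hLodef
      have hsplit : ∀ (u : X → ℤ) (c : UC X),
          evalv u c.f = c.f x * u x + evalv u (c.f.erase x) := by
        intro u c
        conv_lhs => rw [← Finsupp.single_add_erase x c.f]
        rw [evalv_add, evalv_single]
      have key : ∀ l ∈ Lo, ∀ hg ∈ Hi, l ≤ hg := by
        intro l hl hg hh
        rw [hLodef] at hl
        rw [hHidef] at hh
        obtain ⟨c₂, hc₂, rfl⟩ := Finset.mem_image.1 hl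
        obtain ⟨c₁, hc₁, rfl⟩ := Finset.mem_image.1 hh
        rw [Finset.mem_filter, Set.Finite.mem_toFinset] at hc₁ hc₂
        have hcm : evalv v' (c₁.f + c₂.f) ≤ c₁.bound + c₂.bound :=
          hv' _ (hcomb c₁ hc₁.1 c₂ hc₂.1 hc₁.2 hc₂.2)
        rw [evalv_add, hsplit v' c₁, hsplit v' c₂, hc₁.2, hc₂.2] at hcm
        omega
      obtain ⟨t, htLo, htHi⟩ : ∃ t : ℤ, (∀ l ∈ Lo, l ≤ t) ∧ (∀ h ∈ Hi, t ≤ h) := by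
        rcases Lo.eq_empty_or_nonempty with hLo | hLo
        · rcases Hi.eq_empty_or_nonempty with hHi | hHi
          · exact ⟨0, by simp [hLo], by simp [hHi]⟩
          · exact ⟨Hi.min' hHi, by simp [hLo], fun h hh => Finset.min'_le _ _ hh⟩
        · exact ⟨Lo.max' hLo, fun l hl => Finset.le_max' _ _ hl,
            fun h hh => key _ (Lo.max'_mem hLo) _ hh⟩
      set v : X → ℤ := Function.update v' x t with hvdef
      have hvx : v x = t := by rw [hvdef]; exact Function.update_self x t v'
      have hvagree : ∀ f : X →₀ ℤ, evalv v (f.erase x) = evalv v' (f.erase x) := by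
        intro f
        apply evalv_congr
        intro y hy
        have hyx : y ≠ x := by
          rw [Finsupp.support_erase] at hy
          exact (Finset.mem_erase.1 hy).1
        rw [hvdef]
        exact Function.update_of_ne hyx _ _
      have hsatψ : Sat v ψ := by
        intro c hc
        rw [holds_def, hsplit v c, hvx, hvagree]
        rcases hψcoef c hc with h0 | h0 | h0 <;> rw [h0]
        · have hmem : evalv v' (c.f.erase x) - c.bound ∈ Lo := by
            rw [hLodef]
            exact Finset.mem_image.2 ⟨c, Finset.mem_filter.2 ⟨hψfin.mem_toFinset.2 hc, h0⟩, rfl⟩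
          have := htLo _ hmem
          omega
        · have hφ'mem : c ∈ φ' := by rw [hφ'def]; exact Or.inl ⟨hc, h0⟩
          have := hv' c hφ'mem
          rw [holds_def, hsplit v' c, h0] at this
          omega
        · have hmem : c.bound - evalv v' (c.f.erase x) ∈ Hi := by
            rw [hHidef]
            exact Finset.mem_image.2 ⟨c, Finset.mem_filter.2 ⟨hψfin.mem_toFinset.2 hc, h0⟩, rfl⟩
          have := htHi _ hmem
          omega
      refine ⟨v, fun c hc => holds_of_tightAt x (hsatψ _ ?_)⟩
      rw [hψdef]
      exact ⟨c, hc, rfl⟩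

/-- A (finite) set `φ` of UTVPI constraints is unsatisfiable in ℤ
iff `TTC(φ)` contains a constraint `0 ≤ d` (both coefficients zero) with `d < 0`. -/
theorem utvpi_unsat_iff_TTC_contains_negative {X : Type*}
    (φ : Set (UC X)) (hwf : ∀ c ∈ φ, c.IsUTVPI) (hfin : φ.Finite) :
    ¬ SatZ φ ↔ ∃ d : ℤ, d < 0 ∧ TTC φ ⟨0, d⟩ := by
  constructor
  · intro hunsat
    by_contra hno
    push_neg at hno
    have hV := Vset_finite hfin
    exact hunsat (complete hV.toFinset.card φ hwf hfin hV le_rfl hno)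
  · rintro ⟨d, hd, hT⟩ ⟨v, hv⟩
    have h := holds_of_TTC hv hT
    rw [holds_def] at h
    simp only [evalv_zero] at h
    omega

end UTVPIPaper
end
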